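/- Let m, k, r be positive integers with r ≤ m and r² ≥ m·k. Let S be a fixed subset of {1,…,m} with |S| = r, and let T be a uniformly random subset of {1,…,m} of cardinality r. Then P[ |S ∩ T| ≤ k ] ≤ (e^k / k^k) · (r²/m)^k · e^{−r²/m}. -/

import Mathlib

lemma key_scalar (u v : ℝ) (hv0 : 0 ≤ v) (hvu : v ≤ u) (hu1 : u ≤ 1) :
    (1 - u) * Real.exp v ≤ 1 - u + v := by
  have hE := Real.add_one_le_exp v
  have hEn := Real.add_one_le_exp (-v)
  have hprod : Real.exp (-v) * Real.exp v = 1 := by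
    rw [← Real.exp_add]; simp
  have hpos := Real.exp_pos v
  nlinarith [mul_le_mul_of_nonneg_right hEn hpos.le,
    mul_nonneg (sub_nonneg.2 hvu) (by linarith : (0:ℝ) ≤ Real.exp v - 1)]

lemma step_real (M A B θ : ℝ) (hM2 : 2 ≤ M) (hA : 1 ≤ A) (hAM : A ≤ M)
    (hB : 1 ≤ B) (hBM : B ≤ M) (h0 : 0 ≤ θ) (h1 : θ ≤ 1) :
    B/M * θ * Real.exp (-((A-1)*(B-1)*(1-θ))/(M-1))
      + (M-B)/M * Real.exp (-((A-1)*B*(1-θ))/(M-1))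
      ≤ Real.exp (-(A*B*(1-θ))/M) := by
  set u := 1 - θ with hu
  have hu0 : 0 ≤ u := by simp [hu]; linarith
  have hu1 : u ≤ 1 := by simp [hu]; linarith
  have hM0 : (0:ℝ) < M := by linarith
  have hM1 : (0:ℝ) < M - 1 := by linarith
  set v := (A-1)*u/(M-1) with hv
  have hv0 : 0 ≤ v := div_nonneg (mul_nonneg (by linarith) hu0) hM1.le
  have hvu : v ≤ u := by
    rw [hv, div_le_iff₀ hM1]
    nlinarith [mul_le_mul_of_nonneg_right (by linarith : A - 1 ≤ M - 1) hu0]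
  have hE1 : Real.exp (-((A-1)*(B-1)*u)/(M-1))
      = Real.exp (-((A-1)*B*u)/(M-1)) * Real.exp v := by
    rw [← Real.exp_add]; congr 1; rw [hv]; field_simp; ring
  have key := key_scalar u v hv0 hvu hu1
  set p := B/M with hp
  have hp0 : 0 ≤ p := div_nonneg (by linarith) hM0.le
  have h3 : p * ((1-u) * Real.exp v) + (1 - p) ≤ 1 - p * (u - v) := by
    nlinarith [mul_le_mul_of_nonneg_left key hp0]
  have h4 : 1 - p * (u - v) ≤ Real.exp (-(p * (u - v))) := by
    have := Real.add_one_le_exp (-(p * (u - v))); linarith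
  have hθu : θ = 1 - u := by rw [hu]; ring
  calc B/M * θ * Real.exp (-((A-1)*(B-1)*u)/(M-1))
        + (M-B)/M * Real.exp (-((A-1)*B*u)/(M-1))
      = Real.exp (-((A-1)*B*u)/(M-1)) * (p * ((1-u) * Real.exp v) + (1 - p)) := by
        rw [hE1, hθu, hp]; field_simp
    _ ≤ Real.exp (-((A-1)*B*u)/(M-1)) * Real.exp (-(p * (u - v))) := by
        exact mul_le_mul_of_nonneg_left (le_trans h3 h4) (Real.exp_pos _).le
    _ = Real.exp (-((A-1)*B*u)/(M-1) + -(p * (u - v))) := (Real.exp_add _ _).symm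
    _ = Real.exp (-(A*B*u)/M) := by
        congr 1; rw [hv, hp]; field_simp; ring



lemma binom_pgf (θ : ℝ) (h0 : 0 ≤ θ) (h1 : θ ≤ 1) (c : ℕ) : ∀ a b : ℕ,
    ∑ i ∈ Finset.range (b+1), (a.choose i : ℝ) * (c.choose (b-i) : ℝ) * θ^i
      ≤ ((a+c).choose b : ℝ) * Real.exp (-((a:ℝ) * (b:ℝ) * (1-θ)) / ((a:ℝ)+(c:ℝ))) := by
  intro a
  induction a with
  | zero =>
    intro b
    rw [Finset.sum_eq_single 0]
    · simp
    · intro i _ hi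
      rcases Nat.exists_eq_succ_of_ne_zero hi with ⟨j, rfl⟩
      simp
    · simp
  | succ a ih =>
    intro b
    cases b with
    | zero => simp
    | succ b' =>
      have hrec : ∑ i ∈ Finset.range (b'+1+1), ((a+1).choose i : ℝ) * (c.choose (b'+1-i) : ℝ) * θ^i
          = (∑ i ∈ Finset.range (b'+1+1), (a.choose i : ℝ) * (c.choose (b'+1-i) : ℝ) * θ^i)
            + θ * ∑ i ∈ Finset.range (b'+1), (a.choose i : ℝ) * (c.choose (b'-i) : ℝ) * θ^i := by
        rw [Finset.sum_range_succ' (fun i => ((a+1).choose i : ℝ) * (c.choose (b'+1-i) : ℝ) * θ^i) (b'+1),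
            Finset.sum_range_succ' (fun i => (a.choose i : ℝ) * (c.choose (b'+1-i) : ℝ) * θ^i) (b'+1),
            Finset.mul_sum, add_right_comm, ← Finset.sum_add_distrib]
        congr 1
        · apply Finset.sum_congr rfl
          intro i _
          simp only [Nat.choose_succ_succ, Nat.succ_sub_succ, Nat.cast_add]
          ring
        · simp
      rw [hrec]
      have h1' := ih (b'+1)
      have h2' := ih b'
      by_cases hbc : b' + 1 ≤ a + c + 1
      · -- main case
        by_cases hac : a + c = 0
        · -- a = 0, c = 0, b' = 0
          obtain ⟨ha0, hc0⟩ : a = 0 ∧ c = 0 := by omega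
          have hb'0 : b' = 0 := by omega
          subst ha0; subst hc0; subst hb'0
          norm_num [Finset.sum_range_succ]
          have h := Real.add_one_le_exp (θ - 1)
          linarith
        · have hac1 : 1 ≤ a + c := Nat.one_le_iff_ne_zero.2 hac
          have hstep := step_real ((a:ℝ)+(c:ℝ)+1) ((a:ℝ)+1) ((b':ℝ)+1) θ
            (by have h : (1:ℝ) ≤ (a:ℝ)+(c:ℝ) := by exact_mod_cast hac1
                linarith)
            (by linarith [Nat.cast_nonneg (α := ℝ) a])
            (by have : (0:ℝ) ≤ (c:ℝ) := Nat.cast_nonneg c; linarith)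
            (by linarith [Nat.cast_nonneg (α := ℝ) b'])
            (by exact_mod_cast hbc) h0 h1
          have hA1 : ((a:ℝ)+1) - 1 = (a:ℝ) := by ring
          have hB1 : ((b':ℝ)+1) - 1 = (b':ℝ) := by ring
          have hM1 : ((a:ℝ)+(c:ℝ)+1) - 1 = (a:ℝ)+(c:ℝ) := by ring
          rw [hA1, hB1, hM1] at hstep
          set C : ℝ := ((a+1+c).choose (b'+1) : ℝ) with hC
          have hC0 : 0 ≤ C := Nat.cast_nonneg _
          have hmul := mul_le_mul_of_nonneg_left hstep hC0
          -- coefficient identities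
          have hM0 : ((a:ℝ)+(c:ℝ)+1) ≠ 0 := by positivity
          have id2 : C * (((b':ℝ)+1)/((a:ℝ)+(c:ℝ)+1)) = ((a+c).choose b' : ℝ) := by
            have hnat : (a+c+1) * (a+c).choose b' = (a+c+1).choose (b'+1) * (b'+1) :=
              Nat.add_one_mul_choose_eq (a+c) b'
            have hcast : ((a:ℝ)+(c:ℝ)+1) * ((a+c).choose b' : ℝ)
                = ((a+c+1).choose (b'+1) : ℝ) * ((b':ℝ)+1) := by exact_mod_cast hnat
            rw [hC, show a+1+c = a+c+1 from by ring]
            field_simp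
            linear_combination -hcast
          have id1 : C * ((((a:ℝ)+(c:ℝ)+1) - ((b':ℝ)+1))/((a:ℝ)+(c:ℝ)+1)) = ((a+c).choose (b'+1) : ℝ) := by
            have hnat : (a+c).choose (b'+1) * (a+c+1) = (a+c+1).choose (b'+1) * (a+c+1-(b'+1)) :=
              Nat.choose_mul_succ_eq (a+c) (b'+1)
            have hcast : ((a+c).choose (b'+1) : ℝ) * ((a:ℝ)+(c:ℝ)+1)
                = ((a+c+1).choose (b'+1) : ℝ) * (((a+c+1:ℕ):ℝ) - ((b'+1:ℕ):ℝ)) := by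
              rw [← Nat.cast_sub hbc]; exact_mod_cast hnat
            push_cast at hcast
            rw [hC, show a+1+c = a+c+1 from by ring]
            field_simp
            linear_combination -hcast
          calc (∑ i ∈ Finset.range (b'+1+1), (a.choose i : ℝ) * (c.choose (b'+1-i) : ℝ) * θ^i)
                + θ * ∑ i ∈ Finset.range (b'+1), (a.choose i : ℝ) * (c.choose (b'-i) : ℝ) * θ^i
              ≤ ((a+c).choose (b'+1) : ℝ) * Real.exp (-((a:ℝ) * ((b':ℝ)+1) * (1-θ)) / ((a:ℝ)+(c:ℝ)))
                + θ * (((a+c).choose b' : ℝ) * Real.exp (-((a:ℝ) * (b':ℝ) * (1-θ)) / ((a:ℝ)+(c:ℝ)))) := by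
                apply add_le_add
                · exact_mod_cast h1'
                · exact mul_le_mul_of_nonneg_left h2' h0
            _ = C * ((((b':ℝ)+1)/((a:ℝ)+(c:ℝ)+1)) * θ * Real.exp (-((a:ℝ) * (b':ℝ) * (1-θ)) / ((a:ℝ)+(c:ℝ)))
                      + ((((a:ℝ)+(c:ℝ)+1) - ((b':ℝ)+1))/((a:ℝ)+(c:ℝ)+1)) * Real.exp (-((a:ℝ) * ((b':ℝ)+1) * (1-θ)) / ((a:ℝ)+(c:ℝ)))) := by
                rw [← id1, ← id2]; ring
            _ ≤ C * Real.exp (-(((a:ℝ)+1)*((b':ℝ)+1)*(1-θ))/((a:ℝ)+(c:ℝ)+1)) := hmul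
            _ = ((a+1+c).choose (b'+1) : ℝ) * Real.exp (-(((a+1:ℕ):ℝ) * ((b'+1:ℕ):ℝ) * (1-θ)) / (((a+1:ℕ):ℝ)+(c:ℝ))) := by
                rw [← hC]; congr 2; push_cast; ring
          
      · -- b' + 1 > a + c + 1 : all binomials vanish
        push_neg at hbc
        have z1 : (a+c).choose (b'+1) = 0 := Nat.choose_eq_zero_of_lt (by omega)
        have z2 : (a+c).choose b' = 0 := Nat.choose_eq_zero_of_lt (by omega)
        have z3 : (a+1+c).choose (b'+1) = 0 := Nat.choose_eq_zero_of_lt (by omega)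
        rw [z1] at h1'; rw [z2] at h2'
        simp only [Nat.cast_zero, zero_mul] at h1' h2'
        have hθsum : θ * (∑ i ∈ Finset.range (b'+1), (a.choose i : ℝ) * (c.choose (b'-i) : ℝ) * θ^i) ≤ 0 := by
          have := mul_le_mul_of_nonneg_left h2' h0
          simpa using this
        rw [z3]
        simp only [Nat.cast_zero, zero_mul]
        push_cast
        linarith [h1', hθsum]


lemma fiber_card (m r i : ℕ) (S : Finset (Fin m)) (hS : S.card = r) (hi : i ≤ r) :
    (((Finset.univ : Finset (Fin m)).powersetCard r).filter
        (fun T => (S ∩ T).card = i)).card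
      = r.choose i * (m - r).choose (r - i) := by
  have hcard : ((S.powersetCard i) ×ˢ ((Sᶜ).powersetCard (r - i))).card
      = r.choose i * (m - r).choose (r - i) := by
    rw [Finset.card_product, Finset.card_powersetCard, Finset.card_powersetCard,
      hS, Finset.card_compl, hS, Fintype.card_fin]
  rw [← hcard]
  apply Finset.card_bij' (fun T _ => (S ∩ T, T \ S)) (fun p _ => p.1 ∪ p.2)
  · -- forward maps into target
    intro T hT
    simp only [Finset.mem_filter, Finset.mem_powersetCard] at hT
    obtain ⟨⟨-, hTr⟩, hTi⟩ := hT
    simp only [Finset.mem_product, Finset.mem_powersetCard]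
    refine ⟨⟨Finset.inter_subset_left, hTi⟩, ?_, ?_⟩
    · intro x hx
      simp only [Finset.mem_sdiff] at hx
      simp [Finset.mem_compl, hx.2]
    · have h := Finset.card_sdiff_add_card_inter T S
      rw [Finset.inter_comm S T] at hTi
      omega
  · -- backward maps into source
    intro p hp
    simp only [Finset.mem_product, Finset.mem_powersetCard] at hp
    obtain ⟨⟨hp1, hp1c⟩, hp2, hp2c⟩ := hp
    have hdisj : Disjoint p.1 p.2 := by
      apply Finset.disjoint_left.2
      intro x hx1 hx2
      exact (Finset.mem_compl.1 (hp2 hx2)) (hp1 hx1)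
    have hinter : S ∩ (p.1 ∪ p.2) = p.1 := by
      ext x
      simp only [Finset.mem_inter, Finset.mem_union]
      constructor
      · rintro ⟨hxS, hx12⟩
        rcases hx12 with h | h
        · exact h
        · exact absurd hxS (Finset.mem_compl.1 (hp2 h))
      · intro h; exact ⟨hp1 h, Or.inl h⟩
    simp only [Finset.mem_filter, Finset.mem_powersetCard]
    refine ⟨⟨Finset.subset_univ _, ?_⟩, by rw [hinter, hp1c]⟩
    rw [Finset.card_union_of_disjoint hdisj, hp1c, hp2c]
    omega
  · -- left inverse
    intro T hT
    ext x
    simp only [Finset.mem_union, Finset.mem_inter, Finset.mem_sdiff]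
    tauto
  · -- right inverse
    intro p hp
    simp only [Finset.mem_product, Finset.mem_powersetCard] at hp
    obtain ⟨⟨hp1, hp1c⟩, hp2, hp2c⟩ := hp
    have h1 : S ∩ (p.1 ∪ p.2) = p.1 := by
      ext x
      simp only [Finset.mem_inter, Finset.mem_union]
      constructor
      · rintro ⟨hxS, hx12⟩
        rcases hx12 with h | h
        · exact h
        · exact absurd hxS (Finset.mem_compl.1 (hp2 h))
      · intro h; exact ⟨hp1 h, Or.inl h⟩
    have h2 : (p.1 ∪ p.2) \ S = p.2 := by
      ext x
      simp only [Finset.mem_sdiff, Finset.mem_union]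
      constructor
      · rintro ⟨h | h, hxS⟩
        · exact absurd (hp1 h) hxS
        · exact h
      · intro h
        exact ⟨Or.inr h, Finset.mem_compl.1 (hp2 h)⟩
    rw [h1, h2]



/-- Let `m, k, r` be positive integers with `r ≤ m` and `r² ≥ mk`,
let `S ⊆ {1,…,m}` have cardinality `r`, and let `T` be a uniformly random subset
of `{1,…,m}` of cardinality `r` (so probabilities are ratios of counts of size-`r`
subsets).  Then `P[|S ∩ T| ≤ k] ≤ (e^k/k^k)·(r²/m)^k·e^{−r²/m}`. -/
theorem stmt_1 (m k r : ℕ) (hm : 0 < m) (hk : 0 < k) (hr : 0 < r)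
    (hrm : r ≤ m) (hrk : m * k ≤ r ^ 2)
    (S : Finset (Fin m)) (hS : S.card = r) :
    ((((Finset.univ : Finset (Fin m)).powersetCard r).filter
          (fun T : Finset (Fin m) => (S ∩ T).card ≤ k)).card : ℝ) /
        (((Finset.univ : Finset (Fin m)).powersetCard r).card : ℝ) ≤
      Real.exp 1 ^ k / (k : ℝ) ^ k * ((r : ℝ) ^ 2 / (m : ℝ)) ^ k *
        Real.exp (-((r : ℝ) ^ 2 / (m : ℝ))) := by
  classical
  set P := (Finset.univ : Finset (Fin m)).powersetCard r with hP
  have hm0 : (0:ℝ) < m := by exact_mod_cast hm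
  have hr0 : (0:ℝ) < r := by exact_mod_cast hr
  have hk0 : (0:ℝ) < k := by exact_mod_cast hk
  set θ : ℝ := (k:ℝ) * m / (r:ℝ)^2 with hθ
  have hr2 : (0:ℝ) < (r:ℝ)^2 := by positivity
  have hθpos : 0 < θ := by positivity
  have hθ1 : θ ≤ 1 := by
    rw [hθ, div_le_one hr2]
    have : (m*k : ℕ) ≤ (r^2 : ℕ) := hrk
    have := (Nat.cast_le (α := ℝ)).2 this
    push_cast at this
    linarith
  have hPcard : P.card = m.choose r := by
    rw [hP, Finset.card_powersetCard, Finset.card_univ, Fintype.card_fin]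
  have hC0 : (0:ℝ) < (m.choose r : ℝ) := by
    exact_mod_cast Nat.choose_pos hrm
  -- step 1: sum over P of θ^card
  have hmaps : ∀ T ∈ P, (S ∩ T).card ∈ Finset.range (r+1) := by
    intro T _
    rw [Finset.mem_range, Nat.lt_succ_iff, ← hS]
    exact Finset.card_le_card Finset.inter_subset_left
  have hsum : ∑ T ∈ P, θ^((S ∩ T).card)
      = ∑ i ∈ Finset.range (r+1), (r.choose i : ℝ) * ((m-r).choose (r-i) : ℝ) * θ^i := by
    rw [← Finset.sum_fiberwise_of_maps_to hmaps (fun T => θ^((S ∩ T).card))]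
    apply Finset.sum_congr rfl
    intro i hi
    have : ∑ T ∈ P.filter (fun T => (S ∩ T).card = i), θ^((S ∩ T).card)
        = ∑ T ∈ P.filter (fun T => (S ∩ T).card = i), θ^i := by
      apply Finset.sum_congr rfl
      intro T hT
      rw [(Finset.mem_filter.1 hT).2]
    rw [this, Finset.sum_const, nsmul_eq_mul,
      fiber_card m r i S hS (Nat.lt_succ_iff.1 (Finset.mem_range.1 hi))]
    push_cast
    ring
  -- step 2: N * θ^k ≤ sum
  set N := (P.filter (fun T : Finset (Fin m) => (S ∩ T).card ≤ k)).card with hN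
  have hNsum : (N:ℝ) * θ^k ≤ ∑ T ∈ P, θ^((S ∩ T).card) := by
    calc (N:ℝ) * θ^k = ∑ _T ∈ P.filter (fun T : Finset (Fin m) => (S ∩ T).card ≤ k), θ^k := by
          rw [Finset.sum_const, nsmul_eq_mul]
      _ ≤ ∑ T ∈ P.filter (fun T : Finset (Fin m) => (S ∩ T).card ≤ k), θ^((S ∩ T).card) := by
          apply Finset.sum_le_sum
          intro T hT
          exact pow_le_pow_of_le_one hθpos.le hθ1 (Finset.mem_filter.1 hT).2
      _ ≤ ∑ T ∈ P, θ^((S ∩ T).card) := by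
          apply Finset.sum_le_sum_of_subset_of_nonneg (Finset.filter_subset _ _)
          intro T _ _
          positivity
  -- step 3: binomial bound
  have hbin := binom_pgf θ hθpos.le hθ1 (m - r) r r
  have hrc : r + (m - r) = m := Nat.add_sub_cancel' hrm
  have hrcR : (r:ℝ) + ((m - r : ℕ):ℝ) = (m:ℝ) := by
    rw [Nat.cast_sub hrm]; ring
  rw [hrc, hrcR] at hbin
  have hmain : (N:ℝ) * θ^k ≤ (m.choose r : ℝ) * Real.exp (-((r:ℝ) * (r:ℝ) * (1-θ)) / (m:ℝ)) := by
    calc (N:ℝ) * θ^k ≤ ∑ T ∈ P, θ^((S ∩ T).card) := hNsum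
      _ = _ := hsum
      _ ≤ _ := hbin
  -- step 4: final algebra
  rw [hPcard, div_le_iff₀ hC0]
  have hθk : (0:ℝ) < θ^k := by positivity
  have hexp : Real.exp (-((r:ℝ) * (r:ℝ) * (1-θ)) / (m:ℝ))
      = Real.exp 1 ^ k * Real.exp (-((r:ℝ)^2 / (m:ℝ))) := by
    rw [show -((r:ℝ) * (r:ℝ) * (1-θ)) / (m:ℝ) = (k:ℝ) * 1 + -((r:ℝ)^2 / (m:ℝ)) from by
      rw [hθ]; field_simp; ring]
    rw [Real.exp_add, Real.exp_nat_mul]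
  have hθkval : θ^k = (k:ℝ)^k * ((m:ℝ)/(r:ℝ)^2)^k := by
    rw [hθ]; rw [← mul_pow]; congr 1; field_simp
  calc (N:ℝ) ≤ (m.choose r : ℝ) * Real.exp (-((r:ℝ) * (r:ℝ) * (1-θ)) / (m:ℝ)) / θ^k := by
        rw [le_div_iff₀ hθk]; exact hmain
    _ = Real.exp 1 ^ k / (k:ℝ)^k * ((r:ℝ)^2/(m:ℝ))^k * Real.exp (-((r:ℝ)^2/(m:ℝ)))
        * (m.choose r : ℝ) := by
        rw [hexp, hθkval]
        simp only [div_pow]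
        field_simp
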